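/- There is a constant c (c = 100 suffices) such that for all sufficiently small ε ∈ (0,1) and all r > 0, every (1+ε/c)-spanner of the core gadget H_r must contain every long edge of H_r, and consequently has total weight at least w(MST(H_r))/(6ε). In particular, for every long edge e = (x_i, x_{i+k}), the shortest-path distance between x_i and x_{i+k} in H_r with e removed exceeds (1+ε/c) times the weight of e. -/

import Mathlib

open scoped ENNReal

namespace LightSpanners

/-- The total weight of a walk: the sum of the weights of its edges. -/
def walkWeight {V : Type*} {G : SimpleGraph V} (w : Sym2 V → ℝ) {u v : V} (p : G.Walk u v) : ℝ :=
  (p.edges.map w).sum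

/-- Weighted shortest-path distance (`∞` if there is no path). -/
noncomputable def wdist {V : Type*} (G : SimpleGraph V) (w : Sym2 V → ℝ) (u v : V) : ℝ≥0∞ :=
  ⨅ p : G.Walk u v, ENNReal.ofReal (walkWeight w p)

/-- Total edge weight of a graph. -/
noncomputable def gweight {V : Type*} (G : SimpleGraph V) (w : Sym2 V → ℝ) : ℝ :=
  ∑ᶠ e ∈ G.edgeSet, w e

/-- All edges have positive weight. -/
def PosWeights {V : Type*} (G : SimpleGraph V) (w : Sym2 V → ℝ) : Prop :=
  ∀ e ∈ G.edgeSet, 0 < w e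

/-- Weight of a minimum spanning tree of `G`: the infimum of the total weights of
spanning trees of `G`. -/
noncomputable def mstWeight {V : Type*} (G : SimpleGraph V) (w : Sym2 V → ℝ) : ℝ :=
  sInf {x : ℝ | ∃ T : SimpleGraph V, T ≤ G ∧ T.IsTree ∧ gweight T w = x}

/-- `H` is a `t`-spanner of `G` (with edge weights `w`). -/
def IsSpanner {V : Type*} (G H : SimpleGraph V) (w : Sym2 V → ℝ) (t : ℝ) : Prop :=
  H ≤ G ∧ ∀ u v : V, wdist H w u v ≤ ENNReal.ofReal t * wdist G w u v

/-- `G` contains the complete graph on `r` vertices as a minor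
(branch-set characterization). -/
def HasCompleteMinor {V : Type*} (G : SimpleGraph V) (r : ℕ) : Prop :=
  ∃ B : Fin r → Set V,
    (∀ i, (B i).Nonempty) ∧
    (∀ i, (G.induce (B i)).Connected) ∧
    (∀ i j, i ≠ j → Disjoint (B i) (B j)) ∧
    (∀ i j, i ≠ j → ∃ u ∈ B i, ∃ v ∈ B j, G.Adj u v)

/-- Euclidean/metric weights on the pairs of a set of points. -/
noncomputable def distW {E : Type*} [PseudoMetricSpace E] (s : Set E) : Sym2 s → ℝ :=
  Sym2.lift ⟨fun a b => dist (a : E) (b : E), fun a b => dist_comm _ _⟩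

/-- The breakpoints of the core gadget at scale `r`:  the `a`-th breakpoint is the point
of the circle of radius `r` centered at the origin with angle `a·ε^{3/2}` (so consecutive
breakpoints subtend an angle `ε^{3/2}`). -/
noncomputable def gadgetPt (r ε : ℝ) (a : ℕ) : ℂ :=
  (r : ℂ) * Complex.exp ((((a : ℝ) * ε ^ ((3 : ℝ) / 2) : ℝ) : ℂ) * Complex.I)

/-- The (abstract) core gadget graph on the `2k` breakpoints `0, 1, …, 2k−1`:
the short edges `(i, i+1)` for `0 ≤ i ≤ 2k−2`, the long edges `(i, i+k)` for
`0 ≤ i ≤ k−1`, and the terminal edge `(0, 2k−1)`. -/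
def coreGadget (k : ℕ) : SimpleGraph (Fin (2 * k)) :=
  SimpleGraph.fromRel (fun i j =>
    (j : ℕ) = (i : ℕ) + 1 ∨ (j : ℕ) = (i : ℕ) + k ∨
      ((i : ℕ) = 0 ∧ (j : ℕ) = 2 * k - 1))

/-- The edge weights of the core gadget at scale `r`: Euclidean distances between the
corresponding breakpoints. -/
noncomputable def gadgetW (r ε : ℝ) {k : ℕ} : Sym2 (Fin (2 * k)) → ℝ :=
  Sym2.lift ⟨fun i j => dist (gadgetPt r ε (i : ℕ)) (gadgetPt r ε (j : ℕ)),
    fun i j => dist_comm _ _⟩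



@[simp] lemma walkWeight_nil {V : Type*} {G : SimpleGraph V} (w : Sym2 V → ℝ) (u : V) :
    walkWeight w (SimpleGraph.Walk.nil : G.Walk u u) = 0 := rfl

@[simp] lemma walkWeight_cons {V : Type*} {G : SimpleGraph V} (w : Sym2 V → ℝ) {u v x : V}
    (h : G.Adj u v) (p : G.Walk v x) :
    walkWeight w (SimpleGraph.Walk.cons h p) = w s(u, v) + walkWeight w p := by
  simp [walkWeight]

lemma wdist_le_walk {V : Type*} {G : SimpleGraph V} (w : Sym2 V → ℝ) {u v : V} (p : G.Walk u v) :
    wdist G w u v ≤ ENNReal.ofReal (walkWeight w p) := iInf_le _ p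

lemma walkWeight_mapLe {V : Type*} {G G' : SimpleGraph V} (h : G ≤ G') (w : Sym2 V → ℝ)
    {u v : V} (p : G.Walk u v) : walkWeight w (p.mapLe h) = walkWeight w p := by
  induction p with
  | nil => rfl
  | cons h' p ih => simp [SimpleGraph.Walk.mapLe] at ih ⊢; simpa using ih

lemma wdist_anti {V : Type*} {G G' : SimpleGraph V} (h : G ≤ G') (w : Sym2 V → ℝ) (u v : V) :
    wdist G' w u v ≤ wdist G w u v :=
  le_iInf fun p => (wdist_le_walk w (p.mapLe h)).trans_eq (by rw [walkWeight_mapLe])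

lemma ofReal_le_wdist {V : Type*} {G : SimpleGraph V} {w : Sym2 V → ℝ} {u v : V} {B : ℝ}
    (hB : ∀ p : G.Walk u v, B ≤ walkWeight w p) :
    ENNReal.ofReal B ≤ wdist G w u v :=
  le_iInf fun p => ENNReal.ofReal_le_ofReal (hB p)

lemma potential_le_walkWeight {V : Type*} {G : SimpleGraph V} {w : Sym2 V → ℝ} (Φ : V → ℝ)
    (h : ∀ a b : V, G.Adj a b → Φ b - Φ a ≤ w s(a, b)) {u v : V} (p : G.Walk u v) :
    Φ v - Φ u ≤ walkWeight w p := by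
  induction p with
  | nil => simp
  | @cons a b c h' p ih =>
    have := h a b h'
    simp only [walkWeight_cons]
    linarith




lemma abs_exp_sub_exp (A B : ℝ) :
    ‖Complex.exp ((A:ℂ) * Complex.I) - Complex.exp ((B:ℂ) * Complex.I)‖
      = 2 * |Real.sin ((A - B) / 2)| := by
  have key : Complex.exp ((A:ℂ) * Complex.I) - Complex.exp ((B:ℂ) * Complex.I)
      = Complex.exp ((((A+B)/2 : ℝ) : ℂ) * Complex.I) *
        (Complex.exp ((((A-B)/2 : ℝ) : ℂ) * Complex.I) -
         Complex.exp (-((((A-B)/2 : ℝ) : ℂ) * Complex.I))) := by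
    rw [mul_sub, ← Complex.exp_add, ← Complex.exp_add]
    push_cast
    ring_nf
  have sin_eq : Complex.exp ((((A-B)/2 : ℝ) : ℂ) * Complex.I) -
      Complex.exp (-((((A-B)/2 : ℝ) : ℂ) * Complex.I))
      = 2 * Complex.sin (((A-B)/2 : ℝ) : ℂ) * Complex.I := by
    rw [Complex.sin]
    push_cast
    ring_nf
    rw [Complex.I_sq]
    ring
  rw [key, sin_eq, norm_mul, Complex.norm_exp_ofReal_mul_I, one_mul, norm_mul, norm_mul,
    Complex.norm_I, Complex.norm_two, mul_one, ← Complex.ofReal_sin, Complex.norm_real, Real.norm_eq_abs]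

lemma gadget_dist {r ε : ℝ} (hr : 0 ≤ r) (a b : ℕ) :
    dist (gadgetPt r ε a) (gadgetPt r ε b)
      = 2 * r * |Real.sin ((((a:ℝ) - (b:ℝ)) * ε ^ ((3:ℝ)/2)) / 2)| := by
  rw [Complex.dist_eq, gadgetPt, gadgetPt, ← mul_sub, norm_mul, Complex.norm_real, Real.norm_eq_abs,
    abs_of_nonneg hr, abs_exp_sub_exp]
  rw [show ((a:ℝ) * ε ^ ((3:ℝ)/2) - (b:ℝ) * ε ^ ((3:ℝ)/2)) = ((a:ℝ) - (b:ℝ)) * ε ^ ((3:ℝ)/2) by ring]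
  ring



open SimpleGraph

private lemma pg_aux {n : ℕ} (v w : Fin n) (hlt : (v:ℕ) + 1 = (w:ℕ))
    (p : (pathGraph n).Walk v w) : s(v, w) ∈ p.edges := by
  by_contra hmem
  have := p.exists_boundary_dart {x : Fin n | (x:ℕ) ≤ (v:ℕ)} (by simp) (by simp; omega)
  obtain ⟨d, hd, hfst, hsnd⟩ := this
  simp only [Set.mem_setOf_eq, not_le] at hfst hsnd
  have hadj := d.adj
  rw [pathGraph_adj] at hadj
  have hfst' : d.fst = v := by apply Fin.ext; omega
  have hsnd' : d.snd = w := by apply Fin.ext; omega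
  apply hmem
  have hde : d.edge = s(v, w) := by
    have : d.toProd = (v, w) := Prod.ext hfst' hsnd'
    rw [Dart.edge, this]
  rw [← hde]
  exact List.mem_map_of_mem (f := Dart.edge) hd

lemma pathGraph_isAcyclic (n : ℕ) : (pathGraph n).IsAcyclic := by
  rw [isAcyclic_iff_forall_adj_isBridge]
  intro v w hvw
  rw [isBridge_iff_adj_and_forall_walk_mem_edges]
  intro p
  rcases pathGraph_adj.mp hvw with h | h
  · exact pg_aux v w h p
  · have := pg_aux w v h p.reverse
    rw [Walk.edges_reverse, List.mem_reverse, Sym2.eq_swap] at this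
    exact this

lemma pathGraph_isTree (n : ℕ) : (pathGraph (n+1)).IsTree :=
  ⟨pathGraph_connected n, pathGraph_isAcyclic (n+1)⟩




lemma phi_spec (σ L T D : ℝ) (k i : ℕ) (hik : i < k) (hσ0 : 0 ≤ σ) (hT0 : 0 ≤ T)
    (hD0 : 0 ≤ D) (hD2 : D ≤ 2*σ) (hL2 : ((k:ℝ)-2)*σ ≤ L) (hsum : (k:ℝ)*σ = L + D)
    (hterm : (2*(k:ℝ)-1)*σ - ((k:ℝ)-1)*D ≤ T) :
    ∃ Φ : ℕ → ℝ,
      (∀ m, |Φ (m+1) - Φ m| ≤ σ) ∧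
      (∀ m, m < k → m ≠ i → |Φ (m+k) - Φ m| ≤ L) ∧
      (|Φ (2*k-1) - Φ 0| ≤ T) ∧
      (Φ (i+k) - Φ i = (k:ℝ)*σ) := by
  have hk1 : 1 ≤ k := by omega
  have hki : (i:ℝ) + 1 ≤ (k:ℝ) := by exact_mod_cast Nat.cast_le.mpr hik
  refine ⟨fun m => (σ - D)*m + D*((min m (i+k) : ℕ) : ℝ) - D*((min m i : ℕ) : ℝ), ?_, ?_, ?_, ?_⟩
  · intro m
    dsimp only
    rcases Nat.lt_or_ge m i with h | h
    · rw [Nat.min_eq_left (by omega : m ≤ i+k), Nat.min_eq_left (by omega : m ≤ i),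
        Nat.min_eq_left (by omega : m+1 ≤ i+k), Nat.min_eq_left (by omega : m+1 ≤ i)]
      push_cast
      rw [abs_le]; constructor <;> linarith
    rcases Nat.lt_or_ge m (i+k) with h2 | h2
    · rw [Nat.min_eq_left (by omega : m ≤ i+k), Nat.min_eq_right (by omega : i ≤ m),
        Nat.min_eq_left (by omega : m+1 ≤ i+k), Nat.min_eq_right (by omega : i ≤ m+1)]
      push_cast
      rw [abs_le]; constructor <;> linarith
    · rw [Nat.min_eq_right (by omega : i+k ≤ m), Nat.min_eq_right (by omega : i ≤ m),
        Nat.min_eq_right (by omega : i+k ≤ m+1), Nat.min_eq_right (by omega : i ≤ m+1)]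
      push_cast
      rw [abs_le]; constructor <;> linarith
  · intro m hmk hmi
    dsimp only
    have hk2 : (2:ℝ) ≤ (k:ℝ) := by
      have : 2 ≤ k := by omega
      exact_mod_cast Nat.cast_le.mpr this
    have hD2' : (0:ℝ) ≤ 2*σ - D := by linarith
    have hkD : ((k:ℝ)-2)*(2*σ-D) ≥ 0 := mul_nonneg (by linarith) hD2'
    rcases Nat.lt_or_ge m i with h | h
    · have c1 : (m:ℝ) + 1 ≤ (i:ℝ) := by exact_mod_cast Nat.cast_le.mpr (by omega : m+1 ≤ i)
      rw [Nat.min_eq_left (by omega : m ≤ i+k), Nat.min_eq_left (by omega : m ≤ i),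
        Nat.min_eq_left (by omega : m+k ≤ i+k), Nat.min_eq_right (by omega : i ≤ m+k)]
      push_cast
      have h1 : D*(((k:ℝ)-1) - ((i:ℝ)-(m:ℝ))) ≥ 0 :=
        mul_nonneg hD0 (by linarith)
      have h3 : D*(((i:ℝ)-(m:ℝ)) - 1) ≥ 0 := mul_nonneg hD0 (by linarith)
      rw [abs_le]; constructor <;> linarith [h1, h3, hkD]
    · have h' : i < m := by omega
      have c1 : (i:ℝ) + 1 ≤ (m:ℝ) := by exact_mod_cast Nat.cast_le.mpr (by omega : i+1 ≤ m)
      have c2 : (m:ℝ) + 1 ≤ (k:ℝ) := by exact_mod_cast Nat.cast_le.mpr (by omega : m+1 ≤ k)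
      rw [Nat.min_eq_left (by omega : m ≤ i+k), Nat.min_eq_right (by omega : i ≤ m),
        Nat.min_eq_right (by omega : i+k ≤ m+k), Nat.min_eq_right (by omega : i ≤ m+k)]
      push_cast
      have h1 : D*(((k:ℝ)-1) - ((m:ℝ)-(i:ℝ))) ≥ 0 := mul_nonneg hD0 (by linarith)
      have h3 : D*(((m:ℝ)-(i:ℝ)) - 1) ≥ 0 := mul_nonneg hD0 (by linarith)
      rw [abs_le]; constructor <;> linarith [h1, h3, hkD]
  · dsimp only
    rw [Nat.min_eq_right (by omega : i+k ≤ 2*k-1), Nat.min_eq_right (by omega : i ≤ 2*k-1),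
      Nat.min_eq_left (by omega : 0 ≤ i+k), Nat.min_eq_left (by omega : 0 ≤ i),
      Nat.cast_sub (by omega : 1 ≤ 2*k)]
    push_cast
    have h1 : ((k:ℝ)-1)*(2*σ-D) ≥ 0 := mul_nonneg (by linarith) (by linarith)
    rw [abs_le]; constructor <;> linarith [h1]
  · dsimp only
    rw [Nat.min_eq_left (le_refl i), Nat.min_eq_right (by omega : i ≤ i+k),
      Nat.min_eq_left (le_refl (i+k)), Nat.min_eq_left (by omega : i ≤ i+k)]
    push_cast
    ring




lemma gweight_eq_sum {V : Type*} (G : SimpleGraph V) (w : Sym2 V → ℝ)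
    [Fintype G.edgeSet] : gweight G w = ∑ e ∈ G.edgeFinset, w e := by
  rw [gweight, ← SimpleGraph.coe_edgeFinset, finsum_mem_coe_finset]

lemma gweight_nonneg {V : Type*} (G : SimpleGraph V) [Fintype V] [DecidableEq V]
    (w : Sym2 V → ℝ) (hw : ∀ e, 0 ≤ w e) : 0 ≤ gweight G w := by
  classical
  letI : Fintype G.edgeSet := (G.edgeSet.toFinite).fintype
  rw [gweight_eq_sum]
  exact Finset.sum_nonneg fun e _ => hw e

lemma mstWeight_le {V : Type*} [Fintype V] [DecidableEq V] (G : SimpleGraph V)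
    (w : Sym2 V → ℝ) (hw : ∀ e, 0 ≤ w e) (T : SimpleGraph V) (hT : T ≤ G)
    (htree : T.IsTree) : mstWeight G w ≤ gweight T w := by
  apply csInf_le
  · refine ⟨0, fun x hx => ?_⟩
    obtain ⟨T', _, _, rfl⟩ := hx
    exact gweight_nonneg T' w hw
  · exact ⟨T, hT, htree, rfl⟩

lemma pathGraph_le_coreGadget (k : ℕ) : SimpleGraph.pathGraph (2*k) ≤ coreGadget k := by
  intro a b hab
  rw [SimpleGraph.pathGraph_adj] at hab
  rw [coreGadget, SimpleGraph.fromRel_adj]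
  constructor
  · intro h; subst h; omega
  · rcases hab with h | h
    · exact Or.inl (Or.inl h.symm)
    · exact Or.inr (Or.inl h.symm)

lemma coreGadget_adj_long {k : ℕ} (hk : 0 < k) (i j : Fin (2*k)) (hj : (j:ℕ) = (i:ℕ) + k) :
    (coreGadget k).Adj i j := by
  rw [coreGadget, SimpleGraph.fromRel_adj]
  constructor
  · intro h; subst h; omega
  · exact Or.inl (Or.inr (Or.inl hj))


set_option maxHeartbeats 1000000


lemma sin_lb {t : ℝ} (h0 : 0 ≤ t) (h1 : t ≤ 1) :
    t - t^3/6 - t^4*(5/96) ≤ Real.sin t := by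
  have h := abs_le.mp (Real.sin_bound (by rwa [abs_of_nonneg h0]))
  rw [abs_of_nonneg h0] at h
  linarith [h.1, mul_le_of_le_one_right (pow_nonneg h0 4) h1, pow_succ t 4, pow_nonneg h0 4]

lemma sin_ub {t : ℝ} (h0 : 0 ≤ t) (h1 : t ≤ 1) :
    Real.sin t ≤ t - t^3/6 + t^4*(5/96) := by
  have h := abs_le.mp (Real.sin_bound (by rwa [abs_of_nonneg h0]))
  rw [abs_of_nonneg h0] at h
  linarith [h.2, mul_le_of_le_one_right (pow_nonneg h0 4) h1, pow_succ t 4, pow_nonneg h0 4]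

lemma sin_pos_cA {s : ℝ} (hs0 : 0 < s) (hs : s ≤ 1/10) :
    0 < Real.sin (s^3/2) := by
  have hq : ∀ i : ℕ, (0:ℝ) ≤ s^i := fun i => pow_nonneg hs0.le i
  have hp1 : s^1 ≤ 1/10 := by simpa using hs
  have hp2 : s^2 ≤ 1/100 := by
    rw [pow_succ]
    have h := mul_le_mul hp1 hs (hs0.le) (by norm_num : (0:ℝ) ≤ 1/10)
    linarith
  have hp3 : s^3 ≤ 1/1000 := by
    rw [pow_succ]
    have h := mul_le_mul hp2 hs (hs0.le) (by norm_num : (0:ℝ) ≤ 1/100)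
    linarith
  have hp4 : s^4 ≤ 1/10000 := by
    rw [pow_succ]
    have h := mul_le_mul hp3 hs (hs0.le) (by norm_num : (0:ℝ) ≤ 1/1000)
    linarith
  have hp5 : s^5 ≤ 1/100000 := by
    rw [pow_succ]
    have h := mul_le_mul hp4 hs (hs0.le) (by norm_num : (0:ℝ) ≤ 1/10000)
    linarith
  have hp6 : s^6 ≤ 1/1000000 := by
    rw [pow_succ]
    have h := mul_le_mul hp5 hs (hs0.le) (by norm_num : (0:ℝ) ≤ 1/100000)
    linarith
  have hp7 : s^7 ≤ 1/10000000 := by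
    rw [pow_succ]
    have h := mul_le_mul hp6 hs (hs0.le) (by norm_num : (0:ℝ) ≤ 1/1000000)
    linarith
  have hp8 : s^8 ≤ 1/100000000 := by
    rw [pow_succ]
    have h := mul_le_mul hp7 hs (hs0.le) (by norm_num : (0:ℝ) ≤ 1/10000000)
    linarith
  have hp9 : s^9 ≤ 1/1000000000 := by
    rw [pow_succ]
    have h := mul_le_mul hp8 hs (hs0.le) (by norm_num : (0:ℝ) ≤ 1/100000000)
    linarith
  have hp10 : s^10 ≤ 1/10000000000 := by
    rw [pow_succ]
    have h := mul_le_mul hp9 hs (hs0.le) (by norm_num : (0:ℝ) ≤ 1/1000000000)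
    linarith
  have hp11 : s^11 ≤ 1/100000000000 := by
    rw [pow_succ]
    have h := mul_le_mul hp10 hs (hs0.le) (by norm_num : (0:ℝ) ≤ 1/10000000000)
    linarith
  have hp12 : s^12 ≤ 1/1000000000000 := by
    rw [pow_succ]
    have h := mul_le_mul hp11 hs (hs0.le) (by norm_num : (0:ℝ) ≤ 1/100000000000)
    linarith
  have hp13 : s^13 ≤ 1/10000000000000 := by
    rw [pow_succ]
    have h := mul_le_mul hp12 hs (hs0.le) (by norm_num : (0:ℝ) ≤ 1/1000000000000)
    linarith
  have hA3 : (0:ℝ) ≤ s^3/2 := by positivity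
  have hA1 : s^3/2 ≤ 1 := by linarith [hp3]
  have hB3 : (0:ℝ) ≤ (s+s^3)/4 := by positivity
  have hB1 : (s+s^3)/4 ≤ 1 := by linarith [hp3]
  have hC3 : (0:ℝ) ≤ s/2 := by positivity
  have hC1 : s/2 ≤ 1 := by linarith
  have hAl := sin_lb hA3 hA1
  have hAu := sin_ub hA3 hA1
  have hBl := sin_lb hB3 hB1
  have hBu := sin_ub hB3 hB1
  have hCl := sin_lb hC3 hC1
  have cA_g : (0:ℝ) < (1)/2 + (-1)/48*s^6 + (-5)/1536*s^9 := by
    linarith [hp6, hp9]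
  have cA_f : (0:ℝ) < s^3 * ((1)/2 + (-1)/48*s^6 + (-5)/1536*s^9) := mul_pos (pow_pos hs0 3) cA_g
  have hid : s^3/2 - (s^3/2)^3/6 - (s^3/2)^4*(5/96) = s^3 * ((1)/2 + (-1)/48*s^6 + (-5)/1536*s^9) := by ring
  linarith [hAl, cA_f, hid.ge, hid.le]

lemma sin_pos_cB {s : ℝ} (hs0 : 0 < s) (hs : s ≤ 1/10) :
    0 < Real.sin ((s+s^3)/4) := by
  have hq : ∀ i : ℕ, (0:ℝ) ≤ s^i := fun i => pow_nonneg hs0.le i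
  have hp1 : s^1 ≤ 1/10 := by simpa using hs
  have hp2 : s^2 ≤ 1/100 := by
    rw [pow_succ]
    have h := mul_le_mul hp1 hs (hs0.le) (by norm_num : (0:ℝ) ≤ 1/10)
    linarith
  have hp3 : s^3 ≤ 1/1000 := by
    rw [pow_succ]
    have h := mul_le_mul hp2 hs (hs0.le) (by norm_num : (0:ℝ) ≤ 1/100)
    linarith
  have hp4 : s^4 ≤ 1/10000 := by
    rw [pow_succ]
    have h := mul_le_mul hp3 hs (hs0.le) (by norm_num : (0:ℝ) ≤ 1/1000)
    linarith
  have hp5 : s^5 ≤ 1/100000 := by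
    rw [pow_succ]
    have h := mul_le_mul hp4 hs (hs0.le) (by norm_num : (0:ℝ) ≤ 1/10000)
    linarith
  have hp6 : s^6 ≤ 1/1000000 := by
    rw [pow_succ]
    have h := mul_le_mul hp5 hs (hs0.le) (by norm_num : (0:ℝ) ≤ 1/100000)
    linarith
  have hp7 : s^7 ≤ 1/10000000 := by
    rw [pow_succ]
    have h := mul_le_mul hp6 hs (hs0.le) (by norm_num : (0:ℝ) ≤ 1/1000000)
    linarith
  have hp8 : s^8 ≤ 1/100000000 := by
    rw [pow_succ]
    have h := mul_le_mul hp7 hs (hs0.le) (by norm_num : (0:ℝ) ≤ 1/10000000)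
    linarith
  have hp9 : s^9 ≤ 1/1000000000 := by
    rw [pow_succ]
    have h := mul_le_mul hp8 hs (hs0.le) (by norm_num : (0:ℝ) ≤ 1/100000000)
    linarith
  have hp10 : s^10 ≤ 1/10000000000 := by
    rw [pow_succ]
    have h := mul_le_mul hp9 hs (hs0.le) (by norm_num : (0:ℝ) ≤ 1/1000000000)
    linarith
  have hp11 : s^11 ≤ 1/100000000000 := by
    rw [pow_succ]
    have h := mul_le_mul hp10 hs (hs0.le) (by norm_num : (0:ℝ) ≤ 1/10000000000)
    linarith
  have hp12 : s^12 ≤ 1/1000000000000 := by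
    rw [pow_succ]
    have h := mul_le_mul hp11 hs (hs0.le) (by norm_num : (0:ℝ) ≤ 1/100000000000)
    linarith
  have hp13 : s^13 ≤ 1/10000000000000 := by
    rw [pow_succ]
    have h := mul_le_mul hp12 hs (hs0.le) (by norm_num : (0:ℝ) ≤ 1/1000000000000)
    linarith
  have hA3 : (0:ℝ) ≤ s^3/2 := by positivity
  have hA1 : s^3/2 ≤ 1 := by linarith [hp3]
  have hB3 : (0:ℝ) ≤ (s+s^3)/4 := by positivity
  have hB1 : (s+s^3)/4 ≤ 1 := by linarith [hp3]
  have hC3 : (0:ℝ) ≤ s/2 := by positivity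
  have hC1 : s/2 ≤ 1 := by linarith
  have hAl := sin_lb hA3 hA1
  have hAu := sin_ub hA3 hA1
  have hBl := sin_lb hB3 hB1
  have hBu := sin_ub hB3 hB1
  have hCl := sin_lb hC3 hC1
  have cB_g : (0:ℝ) < (1)/4 + (95)/384*s^2 + (-5)/24576*s^3 + (-1)/128*s^4 + (-5)/6144*s^5 + (-1)/128*s^6 + (-5)/4096*s^7 + (-1)/384*s^8 + (-5)/6144*s^9 + (-5)/24576*s^11 := by
    linarith [hp3, hp4, hp5, hp6, hp7, hp8, hp9, hp11, hq 2]
  have cB_f : (0:ℝ) < s^1 * ((1)/4 + (95)/384*s^2 + (-5)/24576*s^3 + (-1)/128*s^4 + (-5)/6144*s^5 + (-1)/128*s^6 + (-5)/4096*s^7 + (-1)/384*s^8 + (-5)/6144*s^9 + (-5)/24576*s^11) := mul_pos (pow_pos hs0 1) cB_g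
  have hid : (s+s^3)/4 - ((s+s^3)/4)^3/6 - ((s+s^3)/4)^4*(5/96) = s^1 * ((1)/4 + (95)/384*s^2 + (-5)/24576*s^3 + (-1)/128*s^4 + (-5)/6144*s^5 + (-1)/128*s^6 + (-5)/4096*s^7 + (-1)/384*s^8 + (-5)/6144*s^9 + (-5)/24576*s^11) := by ring
  linarith [hBl, cB_f, hid.ge, hid.le]

lemma sin_pos_cC {s : ℝ} (hs0 : 0 < s) (hs : s ≤ 1/10) :
    0 < Real.sin (s/2) := by
  have hq : ∀ i : ℕ, (0:ℝ) ≤ s^i := fun i => pow_nonneg hs0.le i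
  have hp1 : s^1 ≤ 1/10 := by simpa using hs
  have hp2 : s^2 ≤ 1/100 := by
    rw [pow_succ]
    have h := mul_le_mul hp1 hs (hs0.le) (by norm_num : (0:ℝ) ≤ 1/10)
    linarith
  have hp3 : s^3 ≤ 1/1000 := by
    rw [pow_succ]
    have h := mul_le_mul hp2 hs (hs0.le) (by norm_num : (0:ℝ) ≤ 1/100)
    linarith
  have hp4 : s^4 ≤ 1/10000 := by
    rw [pow_succ]
    have h := mul_le_mul hp3 hs (hs0.le) (by norm_num : (0:ℝ) ≤ 1/1000)
    linarith
  have hp5 : s^5 ≤ 1/100000 := by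
    rw [pow_succ]
    have h := mul_le_mul hp4 hs (hs0.le) (by norm_num : (0:ℝ) ≤ 1/10000)
    linarith
  have hp6 : s^6 ≤ 1/1000000 := by
    rw [pow_succ]
    have h := mul_le_mul hp5 hs (hs0.le) (by norm_num : (0:ℝ) ≤ 1/100000)
    linarith
  have hp7 : s^7 ≤ 1/10000000 := by
    rw [pow_succ]
    have h := mul_le_mul hp6 hs (hs0.le) (by norm_num : (0:ℝ) ≤ 1/1000000)
    linarith
  have hp8 : s^8 ≤ 1/100000000 := by
    rw [pow_succ]
    have h := mul_le_mul hp7 hs (hs0.le) (by norm_num : (0:ℝ) ≤ 1/10000000)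
    linarith
  have hp9 : s^9 ≤ 1/1000000000 := by
    rw [pow_succ]
    have h := mul_le_mul hp8 hs (hs0.le) (by norm_num : (0:ℝ) ≤ 1/100000000)
    linarith
  have hp10 : s^10 ≤ 1/10000000000 := by
    rw [pow_succ]
    have h := mul_le_mul hp9 hs (hs0.le) (by norm_num : (0:ℝ) ≤ 1/1000000000)
    linarith
  have hp11 : s^11 ≤ 1/100000000000 := by
    rw [pow_succ]
    have h := mul_le_mul hp10 hs (hs0.le) (by norm_num : (0:ℝ) ≤ 1/10000000000)
    linarith
  have hp12 : s^12 ≤ 1/1000000000000 := by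
    rw [pow_succ]
    have h := mul_le_mul hp11 hs (hs0.le) (by norm_num : (0:ℝ) ≤ 1/100000000000)
    linarith
  have hp13 : s^13 ≤ 1/10000000000000 := by
    rw [pow_succ]
    have h := mul_le_mul hp12 hs (hs0.le) (by norm_num : (0:ℝ) ≤ 1/1000000000000)
    linarith
  have hA3 : (0:ℝ) ≤ s^3/2 := by positivity
  have hA1 : s^3/2 ≤ 1 := by linarith [hp3]
  have hB3 : (0:ℝ) ≤ (s+s^3)/4 := by positivity
  have hB1 : (s+s^3)/4 ≤ 1 := by linarith [hp3]
  have hC3 : (0:ℝ) ≤ s/2 := by positivity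
  have hC1 : s/2 ≤ 1 := by linarith
  have hAl := sin_lb hA3 hA1
  have hAu := sin_ub hA3 hA1
  have hBl := sin_lb hB3 hB1
  have hBu := sin_ub hB3 hB1
  have hCl := sin_lb hC3 hC1
  have cC_g : (0:ℝ) < (1)/2 + (-1)/48*s^2 + (-5)/1536*s^3 := by
    linarith [hp2, hp3]
  have cC_f : (0:ℝ) < s^1 * ((1)/2 + (-1)/48*s^2 + (-5)/1536*s^3) := mul_pos (pow_pos hs0 1) cC_g
  have hid : s/2 - (s/2)^3/6 - (s/2)^4*(5/96) = s^1 * ((1)/2 + (-1)/48*s^2 + (-5)/1536*s^3) := by ring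
  linarith [hCl, cC_f, hid.ge, hid.le]

lemma ineq_c4 {s : ℝ} (hs0 : 0 < s) (hs : s ≤ 1/10) :
    (1 - 3*s^2) * Real.sin (s^3/2) ≤ 2*s^2 * Real.sin ((s+s^3)/4) := by
  have hq : ∀ i : ℕ, (0:ℝ) ≤ s^i := fun i => pow_nonneg hs0.le i
  have hp1 : s^1 ≤ 1/10 := by simpa using hs
  have hp2 : s^2 ≤ 1/100 := by
    rw [pow_succ]
    have h := mul_le_mul hp1 hs (hs0.le) (by norm_num : (0:ℝ) ≤ 1/10)
    linarith
  have hp3 : s^3 ≤ 1/1000 := by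
    rw [pow_succ]
    have h := mul_le_mul hp2 hs (hs0.le) (by norm_num : (0:ℝ) ≤ 1/100)
    linarith
  have hp4 : s^4 ≤ 1/10000 := by
    rw [pow_succ]
    have h := mul_le_mul hp3 hs (hs0.le) (by norm_num : (0:ℝ) ≤ 1/1000)
    linarith
  have hp5 : s^5 ≤ 1/100000 := by
    rw [pow_succ]
    have h := mul_le_mul hp4 hs (hs0.le) (by norm_num : (0:ℝ) ≤ 1/10000)
    linarith
  have hp6 : s^6 ≤ 1/1000000 := by
    rw [pow_succ]
    have h := mul_le_mul hp5 hs (hs0.le) (by norm_num : (0:ℝ) ≤ 1/100000)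
    linarith
  have hp7 : s^7 ≤ 1/10000000 := by
    rw [pow_succ]
    have h := mul_le_mul hp6 hs (hs0.le) (by norm_num : (0:ℝ) ≤ 1/1000000)
    linarith
  have hp8 : s^8 ≤ 1/100000000 := by
    rw [pow_succ]
    have h := mul_le_mul hp7 hs (hs0.le) (by norm_num : (0:ℝ) ≤ 1/10000000)
    linarith
  have hp9 : s^9 ≤ 1/1000000000 := by
    rw [pow_succ]
    have h := mul_le_mul hp8 hs (hs0.le) (by norm_num : (0:ℝ) ≤ 1/100000000)
    linarith
  have hp10 : s^10 ≤ 1/10000000000 := by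
    rw [pow_succ]
    have h := mul_le_mul hp9 hs (hs0.le) (by norm_num : (0:ℝ) ≤ 1/1000000000)
    linarith
  have hp11 : s^11 ≤ 1/100000000000 := by
    rw [pow_succ]
    have h := mul_le_mul hp10 hs (hs0.le) (by norm_num : (0:ℝ) ≤ 1/10000000000)
    linarith
  have hp12 : s^12 ≤ 1/1000000000000 := by
    rw [pow_succ]
    have h := mul_le_mul hp11 hs (hs0.le) (by norm_num : (0:ℝ) ≤ 1/100000000000)
    linarith
  have hp13 : s^13 ≤ 1/10000000000000 := by
    rw [pow_succ]
    have h := mul_le_mul hp12 hs (hs0.le) (by norm_num : (0:ℝ) ≤ 1/1000000000000)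
    linarith
  have hA3 : (0:ℝ) ≤ s^3/2 := by positivity
  have hA1 : s^3/2 ≤ 1 := by linarith [hp3]
  have hB3 : (0:ℝ) ≤ (s+s^3)/4 := by positivity
  have hB1 : (s+s^3)/4 ≤ 1 := by linarith [hp3]
  have hC3 : (0:ℝ) ≤ s/2 := by positivity
  have hC1 : s/2 ≤ 1 := by linarith
  have hAl := sin_lb hA3 hA1
  have hAu := sin_ub hA3 hA1
  have hBl := sin_lb hB3 hB1
  have hBu := sin_ub hB3 hB1
  have hCl := sin_lb hC3 hC1
  have c4_g : (0:ℝ) < (383)/192 + (-5)/12288*s^1 + (-1)/64*s^2 + (-5)/3072*s^3 + (1)/192*s^4 + (-5)/2048*s^5 + (-13)/192*s^6 + (-5)/1024*s^7 + (115)/12288*s^9 := by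
    linarith [hp1, hp2, hp3, hp5, hp6, hp7, hq 4, hq 9]
  have c4_f : (0:ℝ) < s^5 * ((383)/192 + (-5)/12288*s^1 + (-1)/64*s^2 + (-5)/3072*s^3 + (1)/192*s^4 + (-5)/2048*s^5 + (-13)/192*s^6 + (-5)/1024*s^7 + (115)/12288*s^9) := mul_pos (pow_pos hs0 5) c4_g
  have e1 : (1 - 3*s^2) * Real.sin (s^3/2) ≤ (1 - 3*s^2) * (s^3/2 - (s^3/2)^3/6 + (s^3/2)^4*(5/96)) := by
    apply mul_le_mul_of_nonneg_left hAu; linarith [hp2]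
  have e2 : 2*s^2 * ((s+s^3)/4 - ((s+s^3)/4)^3/6 - ((s+s^3)/4)^4*(5/96)) ≤ 2*s^2 * Real.sin ((s+s^3)/4) := by
    apply mul_le_mul_of_nonneg_left hBl; positivity
  have hid : 2*s^2 * ((s+s^3)/4 - ((s+s^3)/4)^3/6 - ((s+s^3)/4)^4*(5/96))
      - (1 - 3*s^2) * (s^3/2 - (s^3/2)^3/6 + (s^3/2)^4*(5/96)) = s^5 * ((383)/192 + (-5)/12288*s^1 + (-1)/64*s^2 + (-5)/3072*s^3 + (1)/192*s^4 + (-5)/2048*s^5 + (-13)/192*s^6 + (-5)/1024*s^7 + (115)/12288*s^9) := by ring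
  linarith [c4_f]

lemma ineq_c5 {s : ℝ} (hs0 : 0 < s) (hs : s ≤ 1/10) :
    2*s^2*(1+s^2/100) * Real.sin ((s+s^3)/4) < (1+s^2) * Real.sin (s^3/2) := by
  have hq : ∀ i : ℕ, (0:ℝ) ≤ s^i := fun i => pow_nonneg hs0.le i
  have hp1 : s^1 ≤ 1/10 := by simpa using hs
  have hp2 : s^2 ≤ 1/100 := by
    rw [pow_succ]
    have h := mul_le_mul hp1 hs (hs0.le) (by norm_num : (0:ℝ) ≤ 1/10)
    linarith
  have hp3 : s^3 ≤ 1/1000 := by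
    rw [pow_succ]
    have h := mul_le_mul hp2 hs (hs0.le) (by norm_num : (0:ℝ) ≤ 1/100)
    linarith
  have hp4 : s^4 ≤ 1/10000 := by
    rw [pow_succ]
    have h := mul_le_mul hp3 hs (hs0.le) (by norm_num : (0:ℝ) ≤ 1/1000)
    linarith
  have hp5 : s^5 ≤ 1/100000 := by
    rw [pow_succ]
    have h := mul_le_mul hp4 hs (hs0.le) (by norm_num : (0:ℝ) ≤ 1/10000)
    linarith
  have hp6 : s^6 ≤ 1/1000000 := by
    rw [pow_succ]
    have h := mul_le_mul hp5 hs (hs0.le) (by norm_num : (0:ℝ) ≤ 1/100000)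
    linarith
  have hp7 : s^7 ≤ 1/10000000 := by
    rw [pow_succ]
    have h := mul_le_mul hp6 hs (hs0.le) (by norm_num : (0:ℝ) ≤ 1/1000000)
    linarith
  have hp8 : s^8 ≤ 1/100000000 := by
    rw [pow_succ]
    have h := mul_le_mul hp7 hs (hs0.le) (by norm_num : (0:ℝ) ≤ 1/10000000)
    linarith
  have hp9 : s^9 ≤ 1/1000000000 := by
    rw [pow_succ]
    have h := mul_le_mul hp8 hs (hs0.le) (by norm_num : (0:ℝ) ≤ 1/100000000)
    linarith
  have hp10 : s^10 ≤ 1/10000000000 := by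
    rw [pow_succ]
    have h := mul_le_mul hp9 hs (hs0.le) (by norm_num : (0:ℝ) ≤ 1/1000000000)
    linarith
  have hp11 : s^11 ≤ 1/100000000000 := by
    rw [pow_succ]
    have h := mul_le_mul hp10 hs (hs0.le) (by norm_num : (0:ℝ) ≤ 1/10000000000)
    linarith
  have hp12 : s^12 ≤ 1/1000000000000 := by
    rw [pow_succ]
    have h := mul_le_mul hp11 hs (hs0.le) (by norm_num : (0:ℝ) ≤ 1/100000000000)
    linarith
  have hp13 : s^13 ≤ 1/10000000000000 := by
    rw [pow_succ]
    have h := mul_le_mul hp12 hs (hs0.le) (by norm_num : (0:ℝ) ≤ 1/1000000000000)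
    linarith
  have hA3 : (0:ℝ) ≤ s^3/2 := by positivity
  have hA1 : s^3/2 ≤ 1 := by linarith [hp3]
  have hB3 : (0:ℝ) ≤ (s+s^3)/4 := by positivity
  have hB1 : (s+s^3)/4 ≤ 1 := by linarith [hp3]
  have hC3 : (0:ℝ) ≤ s/2 := by positivity
  have hC1 : s/2 ≤ 1 := by linarith
  have hAl := sin_lb hA3 hA1
  have hAu := sin_ub hA3 hA1
  have hBl := sin_lb hB3 hB1
  have hBu := sin_ub hB3 hB1
  have hCl := sin_lb hC3 hC1
  have c5_g : (0:ℝ) < (1)/4800 + (-5)/12288*s^1 + (41)/3840*s^2 + (-401)/245760*s^3 + (-97)/19200*s^4 + (-151)/61440*s^5 + (-99)/6400*s^6 + (-201)/40960*s^7 + (1)/19200*s^8 + (-113)/30720*s^9 + (-1)/245760*s^11 := by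
    linarith [hp1, hp3, hp4, hp5, hp6, hp7, hp9, hp11, hq 2, hq 8]
  have c5_f : (0:ℝ) < s^5 * ((1)/4800 + (-5)/12288*s^1 + (41)/3840*s^2 + (-401)/245760*s^3 + (-97)/19200*s^4 + (-151)/61440*s^5 + (-99)/6400*s^6 + (-201)/40960*s^7 + (1)/19200*s^8 + (-113)/30720*s^9 + (-1)/245760*s^11) := mul_pos (pow_pos hs0 5) c5_g
  have e1 : (1+s^2) * (s^3/2 - (s^3/2)^3/6 - (s^3/2)^4*(5/96)) ≤ (1+s^2) * Real.sin (s^3/2) := by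
    apply mul_le_mul_of_nonneg_left hAl; positivity
  have e2 : 2*s^2*(1+s^2/100) * Real.sin ((s+s^3)/4) ≤ 2*s^2*(1+s^2/100) * ((s+s^3)/4 - ((s+s^3)/4)^3/6 + ((s+s^3)/4)^4*(5/96)) := by
    apply mul_le_mul_of_nonneg_left hBu; positivity
  have hid : (1+s^2) * (s^3/2 - (s^3/2)^3/6 - (s^3/2)^4*(5/96))
      - 2*s^2*(1+s^2/100) * ((s+s^3)/4 - ((s+s^3)/4)^3/6 + ((s+s^3)/4)^4*(5/96)) = s^5 * ((1)/4800 + (-5)/12288*s^1 + (41)/3840*s^2 + (-401)/245760*s^3 + (-97)/19200*s^4 + (-151)/61440*s^5 + (-99)/6400*s^6 + (-201)/40960*s^7 + (1)/19200*s^8 + (-113)/30720*s^9 + (-1)/245760*s^11) := by ring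
  linarith [c5_f]

lemma ineq_c6 {s : ℝ} (hs0 : 0 < s) (hs : s ≤ 1/10) :
    4*s^2 * Real.sin (s^3/2) - 4*s^4 * Real.sin (s/2) ≤ (1-s^2) * ((1+s^2) * Real.sin (s^3/2) - 2*s^2 * Real.sin ((s+s^3)/4)) := by
  have hq : ∀ i : ℕ, (0:ℝ) ≤ s^i := fun i => pow_nonneg hs0.le i
  have hp1 : s^1 ≤ 1/10 := by simpa using hs
  have hp2 : s^2 ≤ 1/100 := by
    rw [pow_succ]
    have h := mul_le_mul hp1 hs (hs0.le) (by norm_num : (0:ℝ) ≤ 1/10)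
    linarith
  have hp3 : s^3 ≤ 1/1000 := by
    rw [pow_succ]
    have h := mul_le_mul hp2 hs (hs0.le) (by norm_num : (0:ℝ) ≤ 1/100)
    linarith
  have hp4 : s^4 ≤ 1/10000 := by
    rw [pow_succ]
    have h := mul_le_mul hp3 hs (hs0.le) (by norm_num : (0:ℝ) ≤ 1/1000)
    linarith
  have hp5 : s^5 ≤ 1/100000 := by
    rw [pow_succ]
    have h := mul_le_mul hp4 hs (hs0.le) (by norm_num : (0:ℝ) ≤ 1/10000)
    linarith
  have hp6 : s^6 ≤ 1/1000000 := by
    rw [pow_succ]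
    have h := mul_le_mul hp5 hs (hs0.le) (by norm_num : (0:ℝ) ≤ 1/100000)
    linarith
  have hp7 : s^7 ≤ 1/10000000 := by
    rw [pow_succ]
    have h := mul_le_mul hp6 hs (hs0.le) (by norm_num : (0:ℝ) ≤ 1/1000000)
    linarith
  have hp8 : s^8 ≤ 1/100000000 := by
    rw [pow_succ]
    have h := mul_le_mul hp7 hs (hs0.le) (by norm_num : (0:ℝ) ≤ 1/10000000)
    linarith
  have hp9 : s^9 ≤ 1/1000000000 := by
    rw [pow_succ]
    have h := mul_le_mul hp8 hs (hs0.le) (by norm_num : (0:ℝ) ≤ 1/100000000)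
    linarith
  have hp10 : s^10 ≤ 1/10000000000 := by
    rw [pow_succ]
    have h := mul_le_mul hp9 hs (hs0.le) (by norm_num : (0:ℝ) ≤ 1/1000000000)
    linarith
  have hp11 : s^11 ≤ 1/100000000000 := by
    rw [pow_succ]
    have h := mul_le_mul hp10 hs (hs0.le) (by norm_num : (0:ℝ) ≤ 1/10000000000)
    linarith
  have hp12 : s^12 ≤ 1/1000000000000 := by
    rw [pow_succ]
    have h := mul_le_mul hp11 hs (hs0.le) (by norm_num : (0:ℝ) ≤ 1/100000000000)
    linarith
  have hp13 : s^13 ≤ 1/10000000000000 := by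
    rw [pow_succ]
    have h := mul_le_mul hp12 hs (hs0.le) (by norm_num : (0:ℝ) ≤ 1/1000000000000)
    linarith
  have hA3 : (0:ℝ) ≤ s^3/2 := by positivity
  have hA1 : s^3/2 ≤ 1 := by linarith [hp3]
  have hB3 : (0:ℝ) ≤ (s+s^3)/4 := by positivity
  have hB1 : (s+s^3)/4 ≤ 1 := by linarith [hp3]
  have hC3 : (0:ℝ) ≤ s/2 := by positivity
  have hC1 : s/2 ≤ 1 := by linarith
  have hAl := sin_lb hA3 hA1
  have hAu := sin_ub hA3 hA1
  have hBl := sin_lb hB3 hB1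
  have hBu := sin_ub hB3 hB1
  have hCl := sin_lb hC3 hC1
  have c6_g : (0:ℝ) < (1)/192 + (-5)/12288*s^1 + (-7)/96*s^2 + (-175)/12288*s^3 + (-1)/48*s^4 + (-5)/6144*s^5 + (7)/96*s^6 + (-5)/2048*s^7 + (1)/64*s^8 + (175)/12288*s^9 + (15)/4096*s^11 := by
    linarith [hp1, hp2, hp3, hp4, hp5, hp7, hq 6, hq 8, hq 9, hq 11]
  have c6_f : (0:ℝ) < s^5 * ((1)/192 + (-5)/12288*s^1 + (-7)/96*s^2 + (-175)/12288*s^3 + (-1)/48*s^4 + (-5)/6144*s^5 + (7)/96*s^6 + (-5)/2048*s^7 + (1)/64*s^8 + (175)/12288*s^9 + (15)/4096*s^11) := mul_pos (pow_pos hs0 5) c6_g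
  have e1 : (1 - 4*s^2 - s^4) * (s^3/2 - (s^3/2)^3/6 - (s^3/2)^4*(5/96)) ≤ (1 - 4*s^2 - s^4) * Real.sin (s^3/2) := by
    apply mul_le_mul_of_nonneg_left hAl; linarith [hp2, hp4]
  have e2 : (2*s^2 - 2*s^4) * Real.sin ((s+s^3)/4) ≤ (2*s^2 - 2*s^4) * ((s+s^3)/4 - ((s+s^3)/4)^3/6 + ((s+s^3)/4)^4*(5/96)) := by
    apply mul_le_mul_of_nonneg_left hBu
    have h24 : s^4 ≤ s^2 := by nlinarith [hp2, hq 2]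
    linarith
  have e3 : 4*s^4 * (s/2 - (s/2)^3/6 - (s/2)^4*(5/96)) ≤ 4*s^4 * Real.sin (s/2) := by
    apply mul_le_mul_of_nonneg_left hCl; positivity
  have hgoal : (1-s^2) * ((1+s^2) * Real.sin (s^3/2) - 2*s^2 * Real.sin ((s+s^3)/4)) - (4*s^2 * Real.sin (s^3/2) - 4*s^4 * Real.sin (s/2))
      = (1 - 4*s^2 - s^4) * Real.sin (s^3/2) - (2*s^2 - 2*s^4) * Real.sin ((s+s^3)/4) + 4*s^4 * Real.sin (s/2) := by ring
  have hid : (1 - 4*s^2 - s^4) * (s^3/2 - (s^3/2)^3/6 - (s^3/2)^4*(5/96))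
      - (2*s^2 - 2*s^4) * ((s+s^3)/4 - ((s+s^3)/4)^3/6 + ((s+s^3)/4)^4*(5/96))
      + 4*s^4 * (s/2 - (s/2)^3/6 - (s/2)^4*(5/96)) = s^5 * ((1)/192 + (-5)/12288*s^1 + (-7)/96*s^2 + (-175)/12288*s^3 + (-1)/48*s^4 + (-5)/6144*s^5 + (7)/96*s^6 + (-5)/2048*s^7 + (1)/64*s^8 + (175)/12288*s^9 + (15)/4096*s^11) := by ring
  linarith [c6_f, e1, e2, e3, hid.ge, hid.le, hgoal.ge, hgoal.le]

lemma ineq_c7 {s : ℝ} (hs0 : 0 < s) (hs : s ≤ 1/10) :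
    Real.sin (s^3/2) ≤ 3*s^2*(1+s^2) * Real.sin ((s+s^3)/4) := by
  have hq : ∀ i : ℕ, (0:ℝ) ≤ s^i := fun i => pow_nonneg hs0.le i
  have hp1 : s^1 ≤ 1/10 := by simpa using hs
  have hp2 : s^2 ≤ 1/100 := by
    rw [pow_succ]
    have h := mul_le_mul hp1 hs (hs0.le) (by norm_num : (0:ℝ) ≤ 1/10)
    linarith
  have hp3 : s^3 ≤ 1/1000 := by
    rw [pow_succ]
    have h := mul_le_mul hp2 hs (hs0.le) (by norm_num : (0:ℝ) ≤ 1/100)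
    linarith
  have hp4 : s^4 ≤ 1/10000 := by
    rw [pow_succ]
    have h := mul_le_mul hp3 hs (hs0.le) (by norm_num : (0:ℝ) ≤ 1/1000)
    linarith
  have hp5 : s^5 ≤ 1/100000 := by
    rw [pow_succ]
    have h := mul_le_mul hp4 hs (hs0.le) (by norm_num : (0:ℝ) ≤ 1/10000)
    linarith
  have hp6 : s^6 ≤ 1/1000000 := by
    rw [pow_succ]
    have h := mul_le_mul hp5 hs (hs0.le) (by norm_num : (0:ℝ) ≤ 1/100000)
    linarith
  have hp7 : s^7 ≤ 1/10000000 := by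
    rw [pow_succ]
    have h := mul_le_mul hp6 hs (hs0.le) (by norm_num : (0:ℝ) ≤ 1/1000000)
    linarith
  have hp8 : s^8 ≤ 1/100000000 := by
    rw [pow_succ]
    have h := mul_le_mul hp7 hs (hs0.le) (by norm_num : (0:ℝ) ≤ 1/10000000)
    linarith
  have hp9 : s^9 ≤ 1/1000000000 := by
    rw [pow_succ]
    have h := mul_le_mul hp8 hs (hs0.le) (by norm_num : (0:ℝ) ≤ 1/100000000)
    linarith
  have hp10 : s^10 ≤ 1/10000000000 := by
    rw [pow_succ]
    have h := mul_le_mul hp9 hs (hs0.le) (by norm_num : (0:ℝ) ≤ 1/1000000000)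
    linarith
  have hp11 : s^11 ≤ 1/100000000000 := by
    rw [pow_succ]
    have h := mul_le_mul hp10 hs (hs0.le) (by norm_num : (0:ℝ) ≤ 1/10000000000)
    linarith
  have hp12 : s^12 ≤ 1/1000000000000 := by
    rw [pow_succ]
    have h := mul_le_mul hp11 hs (hs0.le) (by norm_num : (0:ℝ) ≤ 1/100000000000)
    linarith
  have hp13 : s^13 ≤ 1/10000000000000 := by
    rw [pow_succ]
    have h := mul_le_mul hp12 hs (hs0.le) (by norm_num : (0:ℝ) ≤ 1/1000000000000)
    linarith
  have hA3 : (0:ℝ) ≤ s^3/2 := by positivity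
  have hA1 : s^3/2 ≤ 1 := by linarith [hp3]
  have hB3 : (0:ℝ) ≤ (s+s^3)/4 := by positivity
  have hB1 : (s+s^3)/4 ≤ 1 := by linarith [hp3]
  have hC3 : (0:ℝ) ≤ s/2 := by positivity
  have hC1 : s/2 ≤ 1 := by linarith
  have hAl := sin_lb hA3 hA1
  have hAu := sin_ub hA3 hA1
  have hBl := sin_lb hB3 hB1
  have hBu := sin_ub hB3 hB1
  have hCl := sin_lb hC3 hC1
  have c7_g : (0:ℝ) < (1)/4 + (191)/128*s^2 + (-5)/8192*s^3 + (23)/32*s^4 + (-25)/8192*s^5 + (-5)/192*s^6 + (-25)/4096*s^7 + (-1)/32*s^8 + (-115)/12288*s^9 + (-1)/128*s^10 + (-25)/8192*s^11 + (-5)/8192*s^13 := by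
    linarith [hp3, hp5, hp6, hp7, hp8, hp9, hp10, hp11, hp13, hq 2, hq 4]
  have c7_f : (0:ℝ) < s^3 * ((1)/4 + (191)/128*s^2 + (-5)/8192*s^3 + (23)/32*s^4 + (-25)/8192*s^5 + (-5)/192*s^6 + (-25)/4096*s^7 + (-1)/32*s^8 + (-115)/12288*s^9 + (-1)/128*s^10 + (-25)/8192*s^11 + (-5)/8192*s^13) := mul_pos (pow_pos hs0 3) c7_g
  have e2 : 3*s^2*(1+s^2) * ((s+s^3)/4 - ((s+s^3)/4)^3/6 - ((s+s^3)/4)^4*(5/96)) ≤ 3*s^2*(1+s^2) * Real.sin ((s+s^3)/4) := by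
    apply mul_le_mul_of_nonneg_left hBl; positivity
  have hid : 3*s^2*(1+s^2) * ((s+s^3)/4 - ((s+s^3)/4)^3/6 - ((s+s^3)/4)^4*(5/96)) - (s^3/2 - (s^3/2)^3/6 + (s^3/2)^4*(5/96)) = s^3 * ((1)/4 + (191)/128*s^2 + (-5)/8192*s^3 + (23)/32*s^4 + (-25)/8192*s^5 + (-5)/192*s^6 + (-25)/4096*s^7 + (-1)/32*s^8 + (-115)/12288*s^9 + (-1)/128*s^10 + (-25)/8192*s^11 + (-5)/8192*s^13) := by ring
  linarith [c7_f, hAu]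



set_option maxHeartbeats 4000000 in
/-- There is a constant c (c = 100 suffices) such that for all
sufficiently small ε ∈ (0,1) and all r > 0, every (1+ε/c)-spanner of the core gadget H_r
must contain every long edge of H_r, and consequently has total weight at least
w(MST(H_r))/(6ε).  In particular, for every long edge e = (x_i, x_{i+k}), the
shortest-path distance between x_i and x_{i+k} in H_r with e removed exceeds (1+ε/c)
times the weight of e. -/
theorem core_gadget_spanner_lower_bound :
    ∃ c : ℝ, 0 < c ∧ ∃ ε₀ : ℝ, 0 < ε₀ ∧
      ∀ (ε : ℝ) (k : ℕ), 2 ≤ k → ε = 1 / (2 * (k : ℝ) - 1) → ε ≤ ε₀ →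
      ∀ r : ℝ, 0 < r →
        (∀ H : SimpleGraph (Fin (2 * k)),
          IsSpanner (coreGadget k) H (gadgetW r ε) (1 + ε / c) →
            (∀ i j : Fin (2 * k), (j : ℕ) = (i : ℕ) + k → H.Adj i j) ∧
            mstWeight (coreGadget k) (gadgetW r ε) / (6 * ε) ≤ gweight H (gadgetW r ε)) ∧
        (∀ i j : Fin (2 * k), (j : ℕ) = (i : ℕ) + k →
          ENNReal.ofReal ((1 + ε / c) * gadgetW r ε s(i, j)) <
            wdist ((coreGadget k).deleteEdges {s(i, j)}) (gadgetW r ε) i j) := by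
  classical
  refine ⟨100, by norm_num, 1/100, by norm_num, ?_⟩
  intro ε k hk2 hεdef hεsmall r hr
  -- ## numeric setup
  have hkR : (2:ℝ) ≤ (k:ℝ) := by exact_mod_cast hk2
  have h2K : (0:ℝ) < 2*(k:ℝ) - 1 := by linarith
  have hε0 : 0 < ε := by rw [hεdef]; positivity
  set s : ℝ := Real.sqrt ε with hsdef
  have hs0 : 0 < s := Real.sqrt_pos.mpr hε0
  have hs2 : s^2 = ε := Real.sq_sqrt hε0.le
  have hs : s ≤ 1/10 := by
    have h10 : Real.sqrt (1/100) = 1/10 := by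
      rw [show (1/100:ℝ) = (1/10)^2 by norm_num, Real.sqrt_sq (by norm_num : (0:ℝ) ≤ 1/10)]
    calc s ≤ Real.sqrt (1/100) := Real.sqrt_le_sqrt hεsmall
    _ = 1/10 := h10
  have hεe : ε * (2*(k:ℝ)-1) = 1 := by
    rw [hεdef]; field_simp
  have hK1 : s^2*(2*(k:ℝ)-1) = 1 := by rw [hs2]; exact hεe
  have hK2 : 2*s^2*(k:ℝ) = 1 + s^2 := by linear_combination hK1
  have hτ : ε ^ ((3:ℝ)/2) = s^3 := by
    rw [← hs2, ← Real.rpow_natCast s 2, ← Real.rpow_natCast s 3, ← Real.rpow_mul hs0.le]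
    norm_num
  -- ## key lengths
  set σ := 2*r*Real.sin (s^3/2) with hσdef
  set L := 2*r*Real.sin ((s+s^3)/4) with hLdef
  set T := 2*r*Real.sin (s/2) with hTdef
  have hApos := sin_pos_cA hs0 hs
  have hBpos := sin_pos_cB hs0 hs
  have hCpos := sin_pos_cC hs0 hs
  have hσpos : 0 < σ := mul_pos (mul_pos (by norm_num : (0:ℝ) < 2) hr) hApos
  have hLpos : 0 < L := mul_pos (mul_pos (by norm_num : (0:ℝ) < 2) hr) hBpos
  have hTpos : 0 < T := mul_pos (mul_pos (by norm_num : (0:ℝ) < 2) hr) hCpos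
  have h2s2 : (0:ℝ) < 2*s^2 := by positivity
  have hQ : (k:ℝ)*s^3/2 = (s+s^3)/4 := by linear_combination (s/4)*hK2
  have hR : (2*(k:ℝ)-1)*s^3/2 = s/2 := by linear_combination (s/2)*hK1
  -- ## edge-weight computations
  have hwe : ∀ a b : Fin (2*k), gadgetW r ε s(a,b)
      = 2*r*|Real.sin ((((a:ℕ):ℝ) - ((b:ℕ):ℝ)) * s^3 / 2)| := by
    intro a b
    have h0 : gadgetW r ε s(a,b) = dist (gadgetPt r ε (a:ℕ)) (gadgetPt r ε (b:ℕ)) := by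
      simp [gadgetW]
    rw [h0, gadget_dist hr.le, hτ]
  have hwshort : ∀ a b : Fin (2*k), (b:ℕ) = (a:ℕ)+1 → gadgetW r ε s(a,b) = σ := by
    intro a b hb
    rw [hwe a b]
    have hc : (((a:ℕ):ℝ) - ((b:ℕ):ℝ)) = -1 := by rw [hb]; push_cast; ring
    rw [hc, show (-1:ℝ)*s^3/2 = -(s^3/2) by ring, Real.sin_neg, abs_neg,
      abs_of_nonneg hApos.le, hσdef]
  have hwlong : ∀ a b : Fin (2*k), (b:ℕ) = (a:ℕ)+k → gadgetW r ε s(a,b) = L := by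
    intro a b hb
    rw [hwe a b]
    have hc : (((a:ℕ):ℝ) - ((b:ℕ):ℝ)) = -(k:ℝ) := by rw [hb]; push_cast; ring
    rw [hc, show (-(k:ℝ))*s^3/2 = -((k:ℝ)*s^3/2) by ring, hQ, Real.sin_neg, abs_neg,
      abs_of_nonneg hBpos.le, hLdef]
  have hwterm : ∀ a b : Fin (2*k), (a:ℕ) = 0 → (b:ℕ) = 2*k-1 → gadgetW r ε s(a,b) = T := by
    intro a b ha hb
    rw [hwe a b]
    have hc : (((a:ℕ):ℝ) - ((b:ℕ):ℝ)) = -(2*(k:ℝ)-1) := by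
      rw [ha, hb, Nat.cast_sub (by omega : 1 ≤ 2*k)]
      push_cast; ring
    rw [hc, show (-(2*(k:ℝ)-1))*s^3/2 = -((2*(k:ℝ)-1)*s^3/2) by ring, hR, Real.sin_neg,
      abs_neg, abs_of_nonneg hCpos.le, hTdef]
  have hwnonneg : ∀ e : Sym2 (Fin (2*k)), 0 ≤ gadgetW r ε e := by
    intro e
    induction e using Sym2.ind with
    | _ a b => rw [hwe a b]; positivity
  -- ## scaled inequalities
  have hc4' : (1-3*s^2)*σ ≤ 2*s^2*L := by
    have h := mul_le_mul_of_nonneg_left (ineq_c4 hs0 hs) (by positivity : (0:ℝ) ≤ 2*r)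
    rw [hσdef, hLdef]; linarith [h]
  have hc5' : 2*s^2*(1+s^2/100)*L < (1+s^2)*σ := by
    have h := mul_lt_mul_of_pos_left (ineq_c5 hs0 hs) (by positivity : (0:ℝ) < 2*r)
    rw [hσdef, hLdef]; linarith [h]
  have hc6' : 4*s^2*σ - 4*s^4*T ≤ (1-s^2)*((1+s^2)*σ - 2*s^2*L) := by
    have h := mul_le_mul_of_nonneg_left (ineq_c6 hs0 hs) (by positivity : (0:ℝ) ≤ 2*r)
    rw [hσdef, hLdef, hTdef]; linarith [h]
  have hc7' : σ ≤ 3*s^2*(1+s^2)*L := by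
    have h := mul_le_mul_of_nonneg_left (ineq_c7 hs0 hs) (by positivity : (0:ℝ) ≤ 2*r)
    rw [hσdef, hLdef]; linarith [h]
  have hKσL : ((k:ℝ)-2)*σ ≤ L := by
    have e : (1-3*s^2)*σ = 2*s^2*(((k:ℝ)-2)*σ) := by linear_combination (-σ)*hK2
    exact le_of_mul_le_mul_left (by linarith [hc4', e]) h2s2
  have hDpos : L < (k:ℝ)*σ := by
    have h1 : 2*s^2*L ≤ 2*s^2*(1+s^2/100)*L := by nlinarith [mul_nonneg (mul_nonneg (sq_nonneg s) (sq_nonneg s)) hLpos.le]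
    have e : (1+s^2)*σ = 2*s^2*((k:ℝ)*σ) := by linear_combination (-σ)*hK2
    exact lt_of_mul_lt_mul_left (by linarith [hc5', e, h1]) h2s2.le
  have hD0 : 0 ≤ (k:ℝ)*σ - L := by linarith
  have hD2 : (k:ℝ)*σ - L ≤ 2*σ := by linarith [hKσL]
  have hsum : (k:ℝ)*σ = L + ((k:ℝ)*σ - L) := by ring
  have hterm : (2*(k:ℝ)-1)*σ - ((k:ℝ)-1)*((k:ℝ)*σ - L) ≤ T := by
    have h4s4 : (0:ℝ) < 4*s^4 := by positivity
    have e : 4*s^4*((2*(k:ℝ)-1)*σ - ((k:ℝ)-1)*((k:ℝ)*σ-L)) =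
        4*s^2*σ - (1-s^2)*((1+s^2)*σ - 2*s^2*L) := by
      linear_combination (4*s^2*σ)*hK1 -
        ((1-s^2)*σ + ((1+s^2)*σ - 2*s^2*L) + σ*(2*s^2*(k:ℝ) - 1 - s^2))*hK2
    exact le_of_mul_le_mul_left (by linarith [hc6', e]) h4s4
  have hstrict : (1 + ε/100)*L < (k:ℝ)*σ := by
    rw [← hs2]
    have e : (1+s^2)*σ = 2*s^2*((k:ℝ)*σ) := by linear_combination (-σ)*hK2
    exact lt_of_mul_lt_mul_left (by linarith [hc5', e]) h2s2.le
  -- ## main strict wdist bound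
  have hmain : ∀ i j : Fin (2*k), (j:ℕ) = (i:ℕ) + k →
      ENNReal.ofReal ((1 + ε/100) * gadgetW r ε s(i,j)) <
        wdist ((coreGadget k).deleteEdges {s(i,j)}) (gadgetW r ε) i j := by
    intro i j hj
    have hik : (i:ℕ) < k := by have := j.isLt; omega
    obtain ⟨Φ, hΦ1, hΦ2, hΦ3, hΦ4⟩ := phi_spec σ L T ((k:ℝ)*σ - L) k (i:ℕ) hik hσpos.le
      hTpos.le hD0 hD2 hKσL hsum hterm
    set Ψ : Fin (2*k) → ℝ := fun v => Φ (v:ℕ) with hΨ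
    have hedge : ∀ a b : Fin (2*k), ((coreGadget k).deleteEdges {s(i,j)}).Adj a b →
        Ψ b - Ψ a ≤ gadgetW r ε s(a,b) := by
      intro a b hab
      rw [SimpleGraph.deleteEdges_adj] at hab
      obtain ⟨hGab, hne⟩ := hab
      rw [Set.mem_singleton_iff] at hne
      rw [coreGadget, SimpleGraph.fromRel_adj] at hGab
      obtain ⟨hab_ne, hrel⟩ := hGab
      have key : ∀ p q : Fin (2*k),
          ((q:ℕ) = (p:ℕ)+1 ∨ (q:ℕ) = (p:ℕ)+k ∨ ((p:ℕ) = 0 ∧ (q:ℕ) = 2*k-1)) →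
          s(p,q) ≠ s(i,j) → |Ψ q - Ψ p| ≤ gadgetW r ε s(p,q) := by
        intro p q hpq hpqne
        rcases hpq with h | h | ⟨h0, h1⟩
        · rw [hwshort p q h, hΨ]
          dsimp only
          rw [h]
          exact hΦ1 (p:ℕ)
        · have hpk : (p:ℕ) < k := by have := q.isLt; omega
          have hpi : (p:ℕ) ≠ (i:ℕ) := by
            intro hpe
            apply hpqne
            have hp : p = i := Fin.ext hpe
            have hq : q = j := Fin.ext (by omega)
            rw [hp, hq]
          rw [hwlong p q h, hΨ]
          dsimp only
          rw [h]
          exact hΦ2 (p:ℕ) hpk hpi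
        · rw [hwterm p q h0 h1, hΨ]
          dsimp only
          rw [h0, h1]
          exact hΦ3
      rcases hrel with h | h
      · exact (le_abs_self _).trans (key a b h hne)
      · have hne' : s(b,a) ≠ s(i,j) := by rwa [Sym2.eq_swap]
        have hk' := key b a h hne'
        have habs : Ψ b - Ψ a ≤ |Ψ a - Ψ b| := by
          rw [abs_sub_comm]; exact le_abs_self _
        calc Ψ b - Ψ a ≤ |Ψ a - Ψ b| := habs
        _ ≤ gadgetW r ε s(b,a) := hk'
        _ = gadgetW r ε s(a,b) := by rw [Sym2.eq_swap]
    have hlow : ENNReal.ofReal ((k:ℝ)*σ) ≤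
        wdist ((coreGadget k).deleteEdges {s(i,j)}) (gadgetW r ε) i j := by
      apply ofReal_le_wdist
      intro p
      have hW := potential_le_walkWeight Ψ hedge p
      have hval : Ψ j - Ψ i = (k:ℝ)*σ := by
        rw [hΨ]
        dsimp only
        rw [hj]
        exact hΦ4
      linarith
    rw [hwlong i j hj]
    refine lt_of_lt_of_le ?_ hlow
    rw [ENNReal.ofReal_lt_ofReal_iff (by positivity)]
    exact hstrict
  refine ⟨?_, fun i j hj => hmain i j hj⟩
  -- ## part (a)
  intro H hspan
  obtain ⟨hle, hsp⟩ := hspan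
  have hlong : ∀ i j : Fin (2*k), (j:ℕ) = (i:ℕ)+k → H.Adj i j := by
    intro i j hj
    by_contra hAdj
    have hHle : H ≤ (coreGadget k).deleteEdges {s(i,j)} := by
      intro a b hab
      rw [SimpleGraph.deleteEdges_adj]
      refine ⟨hle hab, ?_⟩
      rw [Set.mem_singleton_iff]
      intro he
      rcases Sym2.eq_iff.mp he with ⟨ha, hb⟩ | ⟨ha, hb⟩
      · exact hAdj (ha ▸ hb ▸ hab)
      · exact hAdj (ha ▸ hb ▸ hab).symm
    have hGadj : (coreGadget k).Adj i j := coreGadget_adj_long (by omega) i j hj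
    have hwG : wdist (coreGadget k) (gadgetW r ε) i j ≤ ENNReal.ofReal L := by
      have hp := wdist_le_walk (gadgetW r ε) (SimpleGraph.Walk.cons hGadj SimpleGraph.Walk.nil)
      rw [walkWeight_cons, walkWeight_nil, add_zero, hwlong i j hj] at hp
      exact hp
    have ht0 : (0:ℝ) ≤ 1 + ε/100 := by linarith
    have h3 : wdist H (gadgetW r ε) i j ≤ ENNReal.ofReal ((1+ε/100)*L) := by
      calc wdist H (gadgetW r ε) i j
          ≤ ENNReal.ofReal (1+ε/100) * wdist (coreGadget k) (gadgetW r ε) i j := hsp i j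
      _ ≤ ENNReal.ofReal (1+ε/100) * ENNReal.ofReal L := mul_le_mul_right hwG _
      _ = ENNReal.ofReal ((1+ε/100)*L) := (ENNReal.ofReal_mul ht0).symm
    have h4 := wdist_anti hHle (gadgetW r ε) i j
    have h5 := hmain i j hj
    rw [hwlong i j hj] at h5
    exact absurd (h5.trans_le (h4.trans h3)) (lt_irrefl _)
  refine ⟨hlong, ?_⟩
  letI : Fintype ((SimpleGraph.pathGraph (2*k)).edgeSet) := (Set.toFinite _).fintype
  letI : Fintype (H.edgeSet) := (Set.toFinite _).fintype
  have htree : (SimpleGraph.pathGraph (2*k)).IsTree := by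
    obtain ⟨m, hm⟩ : ∃ m, 2*k = m+1 := ⟨2*k-1, by omega⟩
    rw [hm]
    exact pathGraph_isTree m
  have hmst : mstWeight (coreGadget k) (gadgetW r ε) ≤ (2*(k:ℝ)-1)*σ := by
    refine le_trans (mstWeight_le _ _ hwnonneg _ (pathGraph_le_coreGadget k) htree) (le_of_eq ?_)
    rw [gweight_eq_sum]
    have hconst : ∀ e ∈ (SimpleGraph.pathGraph (2*k)).edgeFinset, gadgetW r ε e = σ := by
      intro e he
      rw [SimpleGraph.mem_edgeFinset] at he
      induction e using Sym2.ind with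
      | _ a b =>
        rw [SimpleGraph.mem_edgeSet, SimpleGraph.pathGraph_adj] at he
        rcases he with h | h
        · exact hwshort a b h.symm
        · rw [Sym2.eq_swap]; exact hwshort b a h.symm
    rw [Finset.sum_congr rfl hconst, Finset.sum_const, nsmul_eq_mul]
    have hcard : ((SimpleGraph.pathGraph (2*k)).edgeFinset.card) = 2*k-1 := by
      have hc := htree.card_edgeFinset
      rw [Fintype.card_fin] at hc
      omega
    rw [hcard, Nat.cast_sub (by omega : 1 ≤ 2*k)]
    push_cast
    ring
  have hlongsum : (k:ℝ)*L ≤ gweight H (gadgetW r ε) := by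
    rw [gweight_eq_sum]
    set f : Fin k → Sym2 (Fin (2*k)) := fun a =>
      s((⟨(a:ℕ), by omega⟩ : Fin (2*k)), (⟨(a:ℕ)+k, by omega⟩ : Fin (2*k))) with hf
    have hinj : ∀ a ∈ Finset.univ, ∀ b ∈ Finset.univ, f a = f b → a = b := by
      intro a _ b _ hab
      rw [hf] at hab
      dsimp only at hab
      rcases Sym2.eq_iff.mp hab with ⟨h1, h2⟩ | ⟨h1, h2⟩
      · apply Fin.ext
        have := congrArg Fin.val h1
        simpa using this
      · have hv1 := congrArg Fin.val h1
        have hv2 := congrArg Fin.val h2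
        simp only [] at hv1 hv2
        apply Fin.ext
        have ha := a.isLt
        have hb := b.isLt
        omega
    have hsub : Finset.image f Finset.univ ⊆ H.edgeFinset := by
      intro e he
      rw [Finset.mem_image] at he
      obtain ⟨a, _, rfl⟩ := he
      rw [SimpleGraph.mem_edgeFinset, SimpleGraph.mem_edgeSet]
      exact hlong _ _ rfl
    have hsumL : ∑ e ∈ Finset.image f Finset.univ, gadgetW r ε e = (k:ℝ)*L := by
      rw [Finset.sum_image hinj]
      have hv : ∀ a : Fin k, gadgetW r ε (f a) = L := fun a => hwlong _ _ rfl
      rw [Finset.sum_congr rfl (fun a _ => hv a), Finset.sum_const, Finset.card_univ,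
        Fintype.card_fin, nsmul_eq_mul]
    calc (k:ℝ)*L = ∑ e ∈ Finset.image f Finset.univ, gadgetW r ε e := hsumL.symm
    _ ≤ ∑ e ∈ H.edgeFinset, gadgetW r ε e :=
        Finset.sum_le_sum_of_subset_of_nonneg hsub (fun e _ _ => hwnonneg e)
  rw [div_le_iff₀ (by positivity : (0:ℝ) < 6*ε)]
  have h2 : (2*(k:ℝ)-1)*σ ≤ 6*ε*((k:ℝ)*L) := by
    rw [← hs2]
    apply le_of_mul_le_mul_left _ (by positivity : (0:ℝ) < s^2)
    have e1 : s^2*((2*(k:ℝ)-1)*σ) = σ := by linear_combination σ*hK1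
    have e2 : s^2*(6*s^2*((k:ℝ)*L)) = 3*s^2*(1+s^2)*L := by linear_combination (3*s^2*L)*hK2
    linarith [hc7', e1, e2]
  have h3 : 6*ε*((k:ℝ)*L) ≤ gweight H (gadgetW r ε) * (6*ε) := by
    have := mul_le_mul_of_nonneg_left hlongsum (by positivity : (0:ℝ) ≤ 6*ε)
    linarith
  linarith [hmst, h2, h3]

end LightSpanners
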